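/- Let 1 < c < 3 with c ≠ 2, let X be a large real number, and set τ = X^{1−c−η} for a fixed small η > 0. Define S(x) = ∑_{X < p ≤ 2X} (log p) e(p^c x), where the sum is over primes p. Then ∫_{−τ}^{τ} |S(x)|⁴ dx ≪ X^{4−c} (log X)⁵. -/

import Mathlib

open MeasureTheory Finset



lemma cos_integral_Icc (a T : ℝ) (hT : 0 ≤ T) :
    ∫ x in Set.Icc (-T) T, Real.cos (a*x) =
      if a = 0 then 2*T else (Real.sin (a*T) - Real.sin (a*(-T)))/a := by
  rw [MeasureTheory.integral_Icc_eq_integral_Ioc,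
    ← intervalIntegral.integral_of_le (by linarith : -T ≤ T)]
  by_cases ha : a = 0
  · simp [ha]; ring
  · rw [if_neg ha]
    rw [intervalIntegral.integral_comp_mul_left (fun x => Real.cos x) ha]
    rw [integral_cos]
    field_simp
    rw [smul_eq_mul]; field_simp

lemma cos_integral_Icc_bound (a T : ℝ) (hT : 0 ≤ T) (ha : a ≠ 0) :
    |∫ x in Set.Icc (-T) T, Real.cos (a*x)| ≤ 2/|a| := by
  rw [cos_integral_Icc a T hT, if_neg ha, abs_div]
  gcongr
  calc |Real.sin (a*T) - Real.sin (a*(-T))| ≤ |Real.sin (a*T)| + |Real.sin (a*(-T))| := abs_sub _ _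
    _ ≤ 1 + 1 := add_le_add (Real.abs_sin_le_one _) (Real.abs_sin_le_one _)
    _ = 2 := by norm_num


lemma rpow_gap {c X p q : ℝ} (hc : 1 < c) (hX : 1 ≤ X) (hq : X < q) (hpq : q < p) :
    c * X^(c-1) * (p - q) ≤ p^c - q^c := by
  have hq0 : 0 < q := by linarith
  have hp0 : 0 < p := by linarith
  set s : ℝ := (p - q)/q with hs
  have hs0 : 0 ≤ s := div_nonneg (by linarith) hq0.le
  have hber : 1 + c * s ≤ (1+s)^c :=
    one_add_mul_self_le_rpow_one_add (by linarith) (le_of_lt hc)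
  have h1s : 1 + s = p / q := by rw [hs]; field_simp; ring
  have hkey : q^c * (1 + c*s) ≤ p^c := by
    calc q^c * (1 + c*s) ≤ q^c * (1+s)^c := by
          apply mul_le_mul_of_nonneg_left hber (Real.rpow_nonneg hq0.le c)
      _ = (q * (1+s))^c := (Real.mul_rpow hq0.le (by linarith)).symm
      _ = p^c := by rw [h1s]; congr 1; field_simp
  have hq1 : q^c * s = q^(c-1) * (p - q) := by
    rw [hs, Real.rpow_sub hq0, Real.rpow_one]
    field_simp
  have hmono : X^(c-1) ≤ q^(c-1) :=
    Real.rpow_le_rpow (by linarith) hq.le (by linarith)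
  have : q^c + c * (q^(c-1) * (p-q)) ≤ p^c := by
    calc q^c + c * (q^(c-1)*(p-q)) = q^c * (1 + c*s) := by rw [← hq1]; ring
      _ ≤ p^c := hkey
  nlinarith [Real.rpow_nonneg hq0.le c, mul_le_mul_of_nonneg_right hmono (show (0:ℝ) ≤ p - q by linarith), hc]


lemma sum_inv_Icc_le (N : ℕ) : ∑ d ∈ Finset.Icc 1 N, ((d:ℝ))⁻¹ ≤ 1 + Real.log N := by
  have h : ∑ d ∈ Finset.Icc 1 N, ((d:ℝ))⁻¹ = (harmonic N : ℝ) := by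
    simp only [harmonic_eq_sum_Icc, Rat.cast_sum, Rat.cast_inv, Rat.cast_natCast]
  rw [h]; exact harmonic_le_one_add_log N

lemma offdiag_count {N p : ℕ} {J : Finset ℕ} (hJ : ∀ q ∈ J, q ≤ N) (hp : p ≤ N) :
    ∑ q ∈ J.erase p, |(p:ℝ) - (q:ℝ)|⁻¹ ≤ 2*(1 + Real.log N) := by
  classical
  have key : ∀ (F : Finset ℕ) (e : ℕ → ℕ), (∀ q ∈ F, e q ∈ Finset.Icc 1 N) →
      (Set.InjOn e F) → (∀ q ∈ F, |(p:ℝ) - (q:ℝ)| = (e q : ℝ)) →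
      ∑ q ∈ F, |(p:ℝ) - (q:ℝ)|⁻¹ ≤ 1 + Real.log N := by
    intro F e hmem hinj hval
    have : ∑ q ∈ F, |(p:ℝ) - (q:ℝ)|⁻¹ = ∑ d ∈ F.image e, ((d:ℝ))⁻¹ := by
      rw [Finset.sum_image (fun a ha b hb h => hinj ha hb h)]
      exact Finset.sum_congr rfl fun q hq => by rw [hval q hq]
    rw [this]
    refine le_trans (Finset.sum_le_sum_of_subset_of_nonneg ?_ ?_) (sum_inv_Icc_le N)
    · intro d hd
      obtain ⟨q, hq, rfl⟩ := Finset.mem_image.mp hd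
      exact hmem q hq
    · intro d _ _; positivity
  have hsplit : J.erase p = (J.erase p).filter (· < p) ∪ (J.erase p).filter (fun q => p < q) := by
    ext q
    simp only [Finset.mem_union, Finset.mem_filter, Finset.mem_erase]
    constructor
    · rintro ⟨hne, hq⟩
      rcases lt_or_gt_of_ne hne with h | h
      · exact Or.inl ⟨⟨hne, hq⟩, h⟩
      · exact Or.inr ⟨⟨hne, hq⟩, h⟩
    · rintro (⟨h, _⟩ | ⟨h, _⟩) <;> exact h
  have h1 : ∑ q ∈ (J.erase p).filter (· < p), |(p:ℝ) - (q:ℝ)|⁻¹ ≤ 1 + Real.log N := by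
    refine key _ (fun q => p - q) ?_ ?_ ?_
    · intro q hq
      simp only [Finset.mem_filter, Finset.mem_erase] at hq
      exact Finset.mem_Icc.mpr ⟨by omega, by omega⟩
    · intro a ha b hb h
      simp only [Finset.coe_filter, Set.mem_setOf_eq, Finset.mem_erase] at ha hb
      dsimp only at h
      omega
    · intro q hq
      simp only [Finset.mem_filter, Finset.mem_erase] at hq
      have hqp : (q:ℝ) ≤ (p:ℝ) := by exact_mod_cast hq.2.le
      rw [abs_of_nonneg (by linarith), Nat.cast_sub hq.2.le]
  have h2 : ∑ q ∈ (J.erase p).filter (fun q => p < q), |(p:ℝ) - (q:ℝ)|⁻¹ ≤ 1 + Real.log N := by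
    refine key _ (fun q => q - p) ?_ ?_ ?_
    · intro q hq
      simp only [Finset.mem_filter, Finset.mem_erase] at hq
      have := hJ q hq.1.2
      exact Finset.mem_Icc.mpr ⟨by omega, by omega⟩
    · intro a ha b hb h
      simp only [Finset.coe_filter, Set.mem_setOf_eq, Finset.mem_erase] at ha hb
      dsimp only at h
      omega
    · intro q hq
      simp only [Finset.mem_filter, Finset.mem_erase] at hq
      have hqp : (p:ℝ) ≤ (q:ℝ) := by exact_mod_cast hq.2.le
      rw [abs_of_nonpos (by linarith), Nat.cast_sub hq.2.le]
      ring
  rw [hsplit, Finset.sum_union]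
  · linarith
  · rw [Finset.disjoint_left]
    intro a ha hb
    simp only [Finset.mem_filter] at ha hb
    omega


lemma term_re (a b t u : ℝ) :
    ((a:ℂ) * Complex.exp (2*Real.pi*Complex.I*(t:ℂ)) *
      (starRingEnd ℂ) ((b:ℂ) * Complex.exp (2*Real.pi*Complex.I*(u:ℂ)))).re
    = a * b * Real.cos (2*Real.pi*(t-u)) := by
  rw [map_mul, ← Complex.exp_conj]
  have h1 : (starRingEnd ℂ) (2*Real.pi*Complex.I*(u:ℂ)) = -(2*Real.pi*Complex.I*(u:ℂ)) := by
    have : (2*Real.pi*Complex.I*(u:ℂ)) = ((2*Real.pi*u : ℝ):ℂ) * Complex.I := by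
      push_cast; ring
    rw [this, map_mul, Complex.conj_ofReal, Complex.conj_I]
    ring
  rw [h1, Complex.conj_ofReal]
  have h2 : (a:ℂ) * Complex.exp (2*Real.pi*Complex.I*(t:ℂ)) *
      ((b:ℂ) * Complex.exp (-(2*Real.pi*Complex.I*(u:ℂ))))
      = ((a*b : ℝ):ℂ) * Complex.exp (((2*Real.pi*(t-u) : ℝ):ℂ) * Complex.I) := by
    rw [mul_mul_mul_comm, ← Complex.exp_add]
    push_cast
    ring_nf
  rw [h2, Complex.re_ofReal_mul, Complex.exp_ofReal_mul_I_re]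

lemma normsq_expand (a θ : ℕ → ℝ) (I : Finset ℕ) :
    ‖∑ p ∈ I, (a p : ℂ) * Complex.exp (2*Real.pi*Complex.I*((θ p : ℝ):ℂ))‖^2
    = ∑ p ∈ I, ∑ q ∈ I, a p * a q * Real.cos (2*Real.pi*(θ p - θ q)) := by
  set z : ℂ := ∑ p ∈ I, (a p : ℂ) * Complex.exp (2*Real.pi*Complex.I*((θ p : ℝ):ℂ)) with hz
  have h0 : ‖z‖^2 = (z * (starRingEnd ℂ) z).re := by
    rw [Complex.mul_conj, Complex.ofReal_re, Complex.normSq_eq_norm_sq]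
  rw [h0, hz, map_sum, Finset.sum_mul_sum, Complex.re_sum]
  refine Finset.sum_congr rfl fun p _ => ?_
  rw [Complex.re_sum]
  exact Finset.sum_congr rfl fun q _ => term_re (a p) (a q) (θ p) (θ q)

set_option maxHeartbeats 1000000 in
theorem stmt_4 (c η : ℝ) (hc1 : 1 < c) (hc3 : c < 3) (hc2 : c ≠ 2) (hη : 0 < η) :
    ∃ C X₀ : ℝ, 0 < C ∧ ∀ X : ℝ, X₀ ≤ X →
      (∫ x in Set.Icc (-(X ^ (1 - c - η))) (X ^ (1 - c - η)),
        ‖∑ p ∈ (Finset.Ioc ⌊X⌋₊ ⌊2 * X⌋₊).filter Nat.Prime,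
          (Real.log p : ℂ) * Complex.exp (2 * Real.pi * Complex.I * (((p : ℝ) ^ c * x : ℝ) : ℂ))‖ ^ 4) ≤
      C * X ^ (4 - c) * Real.log X ^ 5 := by
  refine ⟨1024, 10, by norm_num, fun X hX => ?_⟩
  have hX0 : (0:ℝ) < X := by linarith
  have hX1 : (1:ℝ) ≤ X := by linarith
  set τ : ℝ := X ^ (1 - c - η) with hτdef
  have hτ0 : 0 ≤ τ := Real.rpow_nonneg hX0.le _
  set I : Finset ℕ := (Finset.Ioc ⌊X⌋₊ ⌊2 * X⌋₊).filter Nat.Prime with hI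
  set S : ℝ → ℂ := fun x => ∑ p ∈ I,
      (Real.log p : ℂ) * Complex.exp (2 * Real.pi * Complex.I * (((p : ℝ) ^ c * x : ℝ) : ℂ)) with hS
  show (∫ x in Set.Icc (-τ) τ, ‖S x‖ ^ 4) ≤ 1024 * X ^ (4 - c) * Real.log X ^ 5
  set L : ℝ := Real.log (2*X) with hL
  have hL0 : 0 < L := Real.log_pos (by linarith)
  have hcont : Continuous S := by
    apply continuous_finset_sum
    intro p _
    fun_prop
  -- membership facts
  have hmem1 : ∀ p ∈ I, X < (p:ℝ) ∧ (p:ℝ) ≤ 2*X := by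
    intro p hp
    rw [hI, Finset.mem_filter, Finset.mem_Ioc] at hp
    constructor
    · have h1 : (⌊X⌋₊ : ℝ) + 1 ≤ (p:ℝ) := by exact_mod_cast hp.1.1
      have h2 : X < (⌊X⌋₊ : ℝ) + 1 := Nat.lt_floor_add_one X
      linarith
    · have h1 : (p:ℝ) ≤ (⌊2*X⌋₊ : ℝ) := by exact_mod_cast hp.1.2
      have h2 : (⌊2*X⌋₊ : ℝ) ≤ 2*X := Nat.floor_le (by linarith)
      linarith
  have hmemN : ∀ p ∈ I, p ≤ ⌊2*X⌋₊ := by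
    intro p hp
    rw [hI, Finset.mem_filter, Finset.mem_Ioc] at hp
    exact hp.1.2
  have hcard : (I.card : ℝ) ≤ 2*X := by
    have h1 : I.card ≤ ⌊2*X⌋₊ := by
      calc I.card ≤ (Finset.Ioc ⌊X⌋₊ ⌊2 * X⌋₊).card :=
            Finset.card_le_card (Finset.filter_subset _ _)
        _ = ⌊2*X⌋₊ - ⌊X⌋₊ := Nat.card_Ioc _ _
        _ ≤ ⌊2*X⌋₊ := Nat.sub_le _ _
    calc (I.card : ℝ) ≤ (⌊2*X⌋₊ : ℝ) := by exact_mod_cast h1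
      _ ≤ 2*X := Nat.floor_le (by linarith)
  have hfL : ∀ p ∈ I, 0 ≤ Real.log p ∧ Real.log p ≤ L := by
    intro p hp
    obtain ⟨h1, h2⟩ := hmem1 p hp
    exact ⟨Real.log_nonneg (by linarith), Real.log_le_log (by linarith) h2⟩
  have hnorm : ∀ x : ℝ, ‖S x‖ ≤ 2*X*L := by
    intro x
    calc ‖S x‖ ≤ ∑ p ∈ I, ‖(Real.log p : ℂ) *
          Complex.exp (2 * Real.pi * Complex.I * (((p : ℝ) ^ c * x : ℝ) : ℂ))‖ :=
          norm_sum_le _ _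
      _ ≤ ∑ p ∈ I, L := by
          apply Finset.sum_le_sum
          intro p hp
          rw [norm_mul]
          have he : ‖Complex.exp (2 * Real.pi * Complex.I * (((p : ℝ) ^ c * x : ℝ) : ℂ))‖ = 1 := by
            rw [Complex.norm_exp]
            simp [Complex.mul_re, Complex.mul_im]
          rw [he, mul_one, Complex.norm_real, Real.norm_eq_abs,
            abs_of_nonneg (hfL p hp).1]
          exact (hfL p hp).2
      _ = I.card * L := by rw [Finset.sum_const, nsmul_eq_mul]
      _ ≤ 2*X*L := by
          apply mul_le_mul_of_nonneg_right hcard hL0.le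
  -- pointwise expansion of the square
  have hexp : ∀ x : ℝ, ‖S x‖^2 = ∑ p ∈ I, ∑ q ∈ I,
      Real.log p * Real.log q * Real.cos ((2*Real.pi*((p:ℝ)^c - (q:ℝ)^c)) * x) := by
    intro x
    have h := normsq_expand (fun p => Real.log p) (fun p => (p:ℝ)^c * x) I
    rw [hS]
    refine h.trans ?_
    refine Finset.sum_congr rfl fun p _ => Finset.sum_congr rfl fun q _ => ?_
    congr 1
    ring
  have e1 : ∫ x in Set.Icc (-τ) τ, ‖S x‖^2
      = ∑ p ∈ I, ∑ q ∈ I, Real.log p * Real.log q *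
        ∫ x in Set.Icc (-τ) τ, Real.cos ((2*Real.pi*((p:ℝ)^c - (q:ℝ)^c)) * x) := by
    simp only [hexp]
    rw [MeasureTheory.integral_finset_sum _ (fun p _ => ?_)]
    · refine Finset.sum_congr rfl fun p _ => ?_
      rw [MeasureTheory.integral_finset_sum _ (fun q _ => ?_)]
      · exact Finset.sum_congr rfl fun q _ => MeasureTheory.integral_const_mul _ _
      · exact Continuous.integrableOn_Icc (by fun_prop)
    · apply MeasureTheory.integrable_finset_sum
      intro q _
      exact Continuous.integrableOn_Icc (by fun_prop)
  have hXc1 : (0:ℝ) < X ^ (c-1) := Real.rpow_pos_of_pos hX0 _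
  have hgap : ∀ p ∈ I, ∀ q ∈ I, p ≠ q →
      c * X^(c-1) * |(p:ℝ) - (q:ℝ)| ≤ |(p:ℝ)^c - (q:ℝ)^c| := by
    intro p hp q hq hne
    rcases lt_or_gt_of_ne hne with h | h
    · have h1 := rpow_gap hc1 hX1 (hmem1 p hp).1 (show (p:ℝ) < q by exact_mod_cast h)
      have h2 : (0:ℝ) ≤ (q:ℝ) - p := by
        have : (p:ℝ) ≤ q := by exact_mod_cast h.le
        linarith
      have h3 : (0:ℝ) ≤ c * X^(c-1) * ((q:ℝ) - p) :=
        mul_nonneg (mul_nonneg (by linarith) hXc1.le) h2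
      rw [abs_sub_comm ((p:ℝ)) q, abs_of_nonneg h2,
        abs_sub_comm ((p:ℝ)^c) _, abs_of_nonneg (le_trans h3 h1)]
      exact h1
    · have h1 := rpow_gap hc1 hX1 (hmem1 q hq).1 (show (q:ℝ) < p by exact_mod_cast h)
      have h2 : (0:ℝ) ≤ (p:ℝ) - q := by
        have : (q:ℝ) ≤ p := by exact_mod_cast h.le
        linarith
      have h3 : (0:ℝ) ≤ c * X^(c-1) * ((p:ℝ) - q) :=
        mul_nonneg (mul_nonneg (by linarith) hXc1.le) h2
      rw [abs_of_nonneg h2, abs_of_nonneg (le_trans h3 h1)]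
      exact h1
  have hpair : ∀ p ∈ I, ∀ q ∈ I, p ≠ q →
      Real.log p * Real.log q * ∫ x in Set.Icc (-τ) τ,
        Real.cos ((2*Real.pi*((p:ℝ)^c - (q:ℝ)^c)) * x)
      ≤ L^2 * ((Real.pi * (c * X^(c-1)))⁻¹ * |(p:ℝ) - (q:ℝ)|⁻¹) := by
    intro p hp q hq hne
    have hd : (p:ℝ) ≠ (q:ℝ) := by exact_mod_cast hne
    have hdist : 0 < |(p:ℝ) - (q:ℝ)| := abs_pos.mpr (sub_ne_zero.mpr hd)
    have hgap' := hgap p hp q hq hne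
    have hgap0 : 0 < |(p:ℝ)^c - (q:ℝ)^c| :=
      lt_of_lt_of_le (by positivity) hgap'
    have hΔ : (p:ℝ)^c - (q:ℝ)^c ≠ 0 := fun h => by simp [h] at hgap0
    have ha : (2*Real.pi*((p:ℝ)^c - (q:ℝ)^c)) ≠ 0 := by
      have := Real.pi_pos
      exact mul_ne_zero (by positivity) hΔ
    have hb := cos_integral_Icc_bound (2*Real.pi*((p:ℝ)^c - (q:ℝ)^c)) τ hτ0 ha
    have habs : |2*Real.pi*((p:ℝ)^c - (q:ℝ)^c)| = 2*Real.pi*|(p:ℝ)^c - (q:ℝ)^c| := by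
      rw [abs_mul, abs_of_nonneg (by positivity : (0:ℝ) ≤ 2*Real.pi)]
    have hb2 : |∫ x in Set.Icc (-τ) τ, Real.cos ((2*Real.pi*((p:ℝ)^c - (q:ℝ)^c)) * x)|
        ≤ (Real.pi * (c * X^(c-1)))⁻¹ * |(p:ℝ) - (q:ℝ)|⁻¹ := by
      refine hb.trans ?_
      rw [habs]
      have hpi := Real.pi_pos
      rw [show (2:ℝ)/(2*Real.pi*|(p:ℝ)^c - (q:ℝ)^c|) = (Real.pi*|(p:ℝ)^c - (q:ℝ)^c|)⁻¹ by
        rw [eq_comm, inv_eq_iff_eq_inv, eq_comm, inv_eq_one_div]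
        field_simp]
      rw [← mul_inv]
      apply inv_anti₀
      · positivity
      · calc Real.pi * (c * X^(c-1)) * |(p:ℝ) - (q:ℝ)|
            = Real.pi * (c * X^(c-1) * |(p:ℝ) - (q:ℝ)|) := by ring
          _ ≤ Real.pi * |(p:ℝ)^c - (q:ℝ)^c| := by
              exact mul_le_mul_of_nonneg_left hgap' hpi.le
    have hlp := hfL p hp
    have hlq := hfL q hq
    calc Real.log p * Real.log q * ∫ x in Set.Icc (-τ) τ,
          Real.cos ((2*Real.pi*((p:ℝ)^c - (q:ℝ)^c)) * x)
        ≤ Real.log p * Real.log q * |∫ x in Set.Icc (-τ) τ,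
          Real.cos ((2*Real.pi*((p:ℝ)^c - (q:ℝ)^c)) * x)| := by
          apply mul_le_mul_of_nonneg_left (le_abs_self _) (mul_nonneg hlp.1 hlq.1)
      _ ≤ (L*L) * ((Real.pi * (c * X^(c-1)))⁻¹ * |(p:ℝ) - (q:ℝ)|⁻¹) := by
          apply mul_le_mul (mul_le_mul hlp.2 hlq.2 hlq.1 hL0.le) hb2 (abs_nonneg _)
          positivity
      _ = L^2 * ((Real.pi * (c * X^(c-1)))⁻¹ * |(p:ℝ) - (q:ℝ)|⁻¹) := by ring
  -- diagonal integral value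
  have hdiagval : ∀ p : ℕ, (∫ x in Set.Icc (-τ) τ,
      Real.cos ((2*Real.pi*((p:ℝ)^c - (p:ℝ)^c)) * x)) = 2*τ := by
    intro p
    rw [cos_integral_Icc _ _ hτ0, if_pos (by simp)]
  have hXinv : (X^(c-1))⁻¹ = X^(1-c) := by
    rw [← Real.rpow_neg hX0.le, show -(c-1) = 1-c by ring]
  have hX2c : X * X^(1-c) = X^(2-c) := by
    rw [show (2-c) = 1+(1-c) by ring, Real.rpow_add hX0, Real.rpow_one]
  have hτle : τ ≤ X^(1-c) := Real.rpow_le_rpow_of_exponent_le hX1 (by linarith)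
  have hN1 : (1:ℝ) ≤ (⌊2*X⌋₊:ℝ) := by
    have : (1:ℕ) ≤ ⌊2*X⌋₊ := Nat.le_floor (by push_cast; linarith)
    exact_mod_cast this
  have hlogN0 : 0 ≤ Real.log (⌊2*X⌋₊:ℝ) := Real.log_nonneg hN1
  have hlogN : Real.log (⌊2*X⌋₊:ℝ) ≤ L :=
    Real.log_le_log (by linarith) (Nat.floor_le (by linarith))
  have hπc : 3 ≤ Real.pi * c := by nlinarith [Real.pi_gt_three]
  have hpi := Real.pi_pos
  -- per-p bound
  have hper : ∀ p ∈ I, ∑ q ∈ I, (Real.log p * Real.log q *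
      ∫ x in Set.Icc (-τ) τ, Real.cos ((2*Real.pi*((p:ℝ)^c - (q:ℝ)^c)) * x))
      ≤ 2*τ*L^2 + X^(1-c)*(L^2*(1+L)) := by
    intro p hp
    rw [← Finset.add_sum_erase _ _ hp]
    have hdiag : Real.log p * Real.log p *
        (∫ x in Set.Icc (-τ) τ, Real.cos ((2*Real.pi*((p:ℝ)^c - (p:ℝ)^c)) * x))
        ≤ 2*τ*L^2 := by
      rw [hdiagval p]
      have hlp := hfL p hp
      have h1 : Real.log p * Real.log p ≤ L*L := mul_le_mul hlp.2 hlp.2 hlp.1 hL0.le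
      calc Real.log p * Real.log p * (2*τ) ≤ L*L*(2*τ) :=
            mul_le_mul_of_nonneg_right h1 (by linarith)
        _ = 2*τ*L^2 := by ring
    have hoff : ∑ q ∈ I.erase p, (Real.log p * Real.log q *
        ∫ x in Set.Icc (-τ) τ, Real.cos ((2*Real.pi*((p:ℝ)^c - (q:ℝ)^c)) * x))
        ≤ X^(1-c)*(L^2*(1+L)) := by
      have step1 : ∑ q ∈ I.erase p, (Real.log p * Real.log q *
          ∫ x in Set.Icc (-τ) τ, Real.cos ((2*Real.pi*((p:ℝ)^c - (q:ℝ)^c)) * x))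
          ≤ ∑ q ∈ I.erase p, L^2 * ((Real.pi * (c * X^(c-1)))⁻¹ * |(p:ℝ) - (q:ℝ)|⁻¹) := by
        apply Finset.sum_le_sum
        intro q hq
        have hq' : q ∈ I := Finset.mem_of_mem_erase hq
        have hne : p ≠ q := (Finset.ne_of_mem_erase hq).symm
        exact hpair p hp q hq' hne
      refine step1.trans ?_
      rw [← Finset.mul_sum, ← Finset.mul_sum]
      have hcount : ∑ q ∈ I.erase p, |(p:ℝ) - (q:ℝ)|⁻¹ ≤ 2*(1 + Real.log (⌊2*X⌋₊:ℝ)) :=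
        offdiag_count hmemN (hmemN p hp)
      calc L^2 * ((Real.pi * (c * X^(c-1)))⁻¹ * ∑ q ∈ I.erase p, |(p:ℝ) - (q:ℝ)|⁻¹)
          ≤ L^2 * ((Real.pi * (c * X^(c-1)))⁻¹ * (2*(1+L))) := by
            have hsum0 : (Real.pi * (c * X^(c-1)))⁻¹ ≥ 0 := by positivity
            have h2L : ∑ q ∈ I.erase p, |(p:ℝ) - (q:ℝ)|⁻¹ ≤ 2*(1+L) := by
              refine hcount.trans ?_
              nlinarith
            exact mul_le_mul_of_nonneg_left (mul_le_mul_of_nonneg_left h2L hsum0)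
              (by positivity)
        _ ≤ X^(1-c)*(L^2*(1+L)) := by
            have hinv : (Real.pi * (c * X^(c-1)))⁻¹ ≤ X^(1-c)/3 := by
              rw [show Real.pi * (c * X^(c-1)) = (Real.pi*c) * X^(c-1) by ring, mul_inv, hXinv]
              have h3 : (Real.pi*c)⁻¹ ≤ 3⁻¹ := by
                apply inv_anti₀ (by norm_num) hπc
              have hX1c : (0:ℝ) < X^(1-c) := Real.rpow_pos_of_pos hX0 _
              calc (Real.pi*c)⁻¹ * X^(1-c) ≤ 3⁻¹ * X^(1-c) :=
                    mul_le_mul_of_nonneg_right h3 hX1c.le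
                _ = X^(1-c)/3 := by ring
            have hX1c : (0:ℝ) < X^(1-c) := Real.rpow_pos_of_pos hX0 _
            have h1L : (0:ℝ) ≤ 1 + L := by linarith
            calc L^2 * ((Real.pi * (c * X^(c-1)))⁻¹ * (2*(1+L)))
                = (Real.pi * (c * X^(c-1)))⁻¹ * (L^2*(2*(1+L))) := by ring
              _ ≤ (X^(1-c)/3) * (L^2*(2*(1+L))) :=
                  mul_le_mul_of_nonneg_right hinv (by positivity)
              _ ≤ X^(1-c)*(L^2*(1+L)) := by
                  nlinarith [mul_nonneg (mul_nonneg hX1c.le (sq_nonneg L)) h1L]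
    linarith
  -- the L² bound
  have hL2 : ∫ x in Set.Icc (-τ) τ, ‖S x‖^2 ≤ 8 * X^(2-c) * (1+L)^3 := by
    rw [e1]
    have hY : (0:ℝ) < X^(2-c) := Real.rpow_pos_of_pos hX0 _
    calc ∑ p ∈ I, ∑ q ∈ I, (Real.log p * Real.log q *
          ∫ x in Set.Icc (-τ) τ, Real.cos ((2*Real.pi*((p:ℝ)^c - (q:ℝ)^c)) * x))
        ≤ ∑ p ∈ I, (2*τ*L^2 + X^(1-c)*(L^2*(1+L))) := Finset.sum_le_sum hper
      _ = I.card * (2*τ*L^2 + X^(1-c)*(L^2*(1+L))) := by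
          rw [Finset.sum_const, nsmul_eq_mul]
      _ ≤ 2*X * (2*τ*L^2 + X^(1-c)*(L^2*(1+L))) := by
          apply mul_le_mul_of_nonneg_right hcard
          have hX1c : (0:ℝ) < X^(1-c) := Real.rpow_pos_of_pos hX0 _
          positivity
      _ = 4*(X*τ)*L^2 + 2*(X*X^(1-c))*(L^2*(1+L)) := by ring
      _ ≤ 4*(X^(2-c))*L^2 + 2*(X^(2-c))*(L^2*(1+L)) := by
          have hA : X*τ ≤ X^(2-c) := by
            calc X*τ ≤ X*X^(1-c) := mul_le_mul_of_nonneg_left hτle hX0.le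
              _ = X^(2-c) := hX2c
          have hB' : X*X^(1-c) ≤ X^(2-c) := hX2c.le
          gcongr <;> positivity
      _ ≤ 8 * X^(2-c) * (1+L)^3 := by
          nlinarith [hY.le, hL0.le, mul_nonneg hY.le
            (show (0:ℝ) ≤ 8*(1+L)^3 - 4*L^2 - 2*(L^2*(1+L)) by nlinarith [hL0.le])]
  -- from L² to L⁴
  have hlogX0 : (0:ℝ) < Real.log X := Real.log_pos (by linarith)
  have h4 : ∀ x ∈ Set.Icc (-τ) τ, ‖S x‖^4 ≤ (2*X*L)^2 * ‖S x‖^2 := by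
    intro x _
    have h := hnorm x
    have h0 := norm_nonneg (S x)
    have hsq : ‖S x‖^2 ≤ (2*X*L)^2 := by nlinarith
    calc ‖S x‖^4 = ‖S x‖^2 * ‖S x‖^2 := by ring
      _ ≤ (2*X*L)^2 * ‖S x‖^2 := mul_le_mul_of_nonneg_right hsq (by positivity)
  have hi4 : IntegrableOn (fun x => ‖S x‖^4) (Set.Icc (-τ) τ) :=
    Continuous.integrableOn_Icc (by fun_prop)
  have hi2 : IntegrableOn (fun x => (2*X*L)^2 * ‖S x‖^2) (Set.Icc (-τ) τ) :=
    Continuous.integrableOn_Icc (by fun_prop)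
  have hX2 : X^(2:ℕ) * X^(2-c) = X^(4-c) := by
    rw [← Real.rpow_natCast X 2, ← Real.rpow_add hX0]
    congr 1
    push_cast
    ring
  have h1L : 1 + L ≤ 2 * Real.log X := by
    have hlog10 : Real.log 10 ≤ Real.log X := Real.log_le_log (by norm_num) hX
    have hlog5 : (1:ℝ) ≤ Real.log 5 := by
      rw [Real.le_log_iff_exp_le (by norm_num)]
      calc Real.exp 1 ≤ 2.7182818286 := Real.exp_one_lt_d9.le
        _ ≤ 5 := by norm_num
    have h10 : Real.log 10 = Real.log 2 + Real.log 5 := by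
      rw [← Real.log_mul (by norm_num) (by norm_num)]
      norm_num
    have hL2X : L = Real.log 2 + Real.log X := Real.log_mul (by norm_num) (ne_of_gt hX0)
    linarith
  calc ∫ x in Set.Icc (-τ) τ, ‖S x‖^4
      ≤ ∫ x in Set.Icc (-τ) τ, (2*X*L)^2 * ‖S x‖^2 :=
        setIntegral_mono_on hi4 hi2 measurableSet_Icc h4
    _ = (2*X*L)^2 * ∫ x in Set.Icc (-τ) τ, ‖S x‖^2 := MeasureTheory.integral_const_mul _ _
    _ ≤ (2*X*L)^2 * (8 * X^(2-c) * (1+L)^3) :=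
        mul_le_mul_of_nonneg_left hL2 (by positivity)
    _ = 32 * (X^(2:ℕ) * X^(2-c)) * (L^2 * (1+L)^3) := by ring
    _ = 32 * X^(4-c) * (L^2 * (1+L)^3) := by rw [hX2]
    _ ≤ 32 * X^(4-c) * ((2*Real.log X)^2 * (2*Real.log X)^3) := by
        have hY4 : (0:ℝ) < X^(4-c) := Real.rpow_pos_of_pos hX0 _
        have hLle : L ≤ 2*Real.log X := by linarith
        gcongr <;> linarith
    _ = 1024 * X^(4-c) * Real.log X ^ 5 := by ring
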